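/- For every integer m ≥ 3, let H_m be the graph obtained from a complete graph K on m − 1 vertices and m pairwise disjoint triangles by joining every vertex of each triangle to every vertex of K. Then the binding number of H_m equals bind(H_m) = 4/3. -/

import Mathlib

open SimpleGraph

variable {V : Type*}

/-- The number of connected components of `G - S`, the subgraph of `G`
induced on the complement of the vertex set `S`. -/
noncomputable def compCount (G : SimpleGraph V) (S : Set V) : ℕ :=
  Nat.card (G.induce (Sᶜ : Set V)).ConnectedComponent

/-- The number of isolated vertices of `G - S`, the subgraph of `G`
induced on the complement of the vertex set `S`. -/
noncomputable def isoCount (G : SimpleGraph V) (S : Set V) : ℕ :=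
  {v : V | v ∉ S ∧ ∀ w : V, G.Adj v w → w ∈ S}.ncard

/-- The neighbourhood `N_G(Y)` of a set of vertices `Y`. -/
def nbhd (G : SimpleGraph V) (Y : Set V) : Set V := {v : V | ∃ y ∈ Y, G.Adj y v}

/-- `G` has a spanning subgraph each of whose connected components is
isomorphic to `K₂` or to an odd cycle `C_{2i+1}` with `i ≥ 2`. -/
def HasK2OddCycleFactor (G : SimpleGraph V) : Prop :=
  ∃ F : SimpleGraph V, F ≤ G ∧ ∀ c : F.ConnectedComponent,
    Nonempty (F.induce c.supp ≃g (⊤ : SimpleGraph (Fin 2))) ∨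
    ∃ i : ℕ, 2 ≤ i ∧ Nonempty (F.induce c.supp ≃g cycleGraph (2 * i + 1))

/-- The toughness `t(G)`: the minimum of `|S| / c(G - S)` over vertex sets `S`
with `c(G - S) ≥ 2`. -/
noncomputable def toughness (G : SimpleGraph V) : ℝ :=
  sInf {x : ℝ | ∃ S : Set V, 2 ≤ compCount G S ∧ x = (S.ncard : ℝ) / (compCount G S : ℝ)}

/-- The isolated toughness `I(G)`: the minimum of `|S| / iso(G - S)` over vertex
sets `S` with `iso(G - S) ≥ 2`. -/
noncomputable def isoToughness (G : SimpleGraph V) : ℝ :=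
  sInf {x : ℝ | ∃ S : Set V, 2 ≤ isoCount G S ∧ x = (S.ncard : ℝ) / (isoCount G S : ℝ)}

/-- The variant isolated toughness `I'(G)`: the minimum of `|S| / (iso(G - S) - 1)`
over vertex sets `S` with `iso(G - S) ≥ 2`. -/
noncomputable def isoToughness' (G : SimpleGraph V) : ℝ :=
  sInf {x : ℝ | ∃ S : Set V, 2 ≤ isoCount G S ∧ x = (S.ncard : ℝ) / ((isoCount G S : ℝ) - 1)}

/-- The binding number `bind(G)`: the minimum of `|N_G(Y)| / |Y|` over nonempty
vertex sets `Y` with `N_G(Y) ≠ V(G)`. -/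
noncomputable def bindingNumber (G : SimpleGraph V) : ℝ :=
  sInf {x : ℝ | ∃ Y : Set V, Y.Nonempty ∧ nbhd G Y ≠ Set.univ ∧
    x = ((nbhd G Y).ncard : ℝ) / (Y.ncard : ℝ)}

/-- `G_m`: the complete graph on `m - 1` vertices together with `m` independent
vertices each joined to every vertex of the complete graph. -/
def Gm (m : ℕ) : SimpleGraph (Fin (m - 1) ⊕ Fin m) where
  Adj x y := x ≠ y ∧ ¬(x.isRight ∧ y.isRight)
  symm := ⟨fun x y ⟨h1, h2⟩ => ⟨h1.symm, fun ⟨a, b⟩ => h2 ⟨b, a⟩⟩⟩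
  loopless := ⟨fun x ⟨h, _⟩ => h rfl⟩

/-- `H_m`: the complete graph on `m - 1` vertices together with `m` pairwise
disjoint triangles, every vertex of each triangle joined to every vertex of the
complete graph. -/
def Hm (m : ℕ) : SimpleGraph (Fin (m - 1) ⊕ (Fin m × Fin 3)) where
  Adj x y := x ≠ y ∧ ∀ p q : Fin m × Fin 3, x = Sum.inr p → y = Sum.inr q → p.1 = q.1
  symm := ⟨fun x y ⟨h1, h2⟩ => ⟨h1.symm, fun p q hp hq => (h2 q p hq hp).symm⟩⟩
  loopless := ⟨fun x ⟨h, _⟩ => h rfl⟩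

/-- `B` is a connected set of vertices of `G` with no cut vertex of the induced graph. -/
def NoCutConn (G : SimpleGraph V) (B : Set V) : Prop :=
  (G.induce B).Connected ∧ ∀ v ∈ B, B = {v} ∨ (G.induce (B \ {v})).Connected

/-- `B` is (the vertex set of) a block of `G`: a maximal connected subgraph
without a cut vertex. -/
def IsBlock (G : SimpleGraph V) (B : Set V) : Prop :=
  NoCutConn G B ∧ ∀ C : Set V, B ⊆ C → NoCutConn G C → B = C

/-- A triangular-cactus: a connected graph each of whose blocks is a triangle. -/
def IsTriangularCactus (G : SimpleGraph V) : Prop :=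
  G.Connected ∧ ∀ B : Set V, IsBlock G B → Nonempty (G.induce B ≃g (⊤ : SimpleGraph (Fin 3)))

section Aux
variable {m : ℕ}

lemma hm_adj_inl (w : Fin (m-1)) (x : Fin (m-1) ⊕ (Fin m × Fin 3)) :
    (Hm m).Adj (Sum.inl w) x ↔ Sum.inl w ≠ x := by
  constructor
  · exact fun h => h.1
  · intro h
    exact ⟨h, fun p q hp _ => by simp at hp⟩

lemma hm_adj_inr_inl (a : Fin m × Fin 3) (w : Fin (m-1)) :
    (Hm m).Adj (Sum.inr a) (Sum.inl w) :=
  ⟨by simp, fun p q _ hq => by simp at hq⟩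

lemma hm_adj_inr_inr (a b : Fin m × Fin 3) :
    (Hm m).Adj (Sum.inr a) (Sum.inr b) ↔ a ≠ b ∧ a.1 = b.1 := by
  constructor
  · exact fun h => ⟨fun e => h.1 (by rw [e]), h.2 a b rfl rfl⟩
  · intro ⟨h1, h2⟩
    refine ⟨by simpa using h1, fun p q hp hq => ?_⟩
    obtain rfl := Sum.inr.injEq .. ▸ hp
    obtain rfl := Sum.inr.injEq .. ▸ hq
    exact h2

lemma witness (m : ℕ) (hm : 3 ≤ m) :
    ∃ Y : Set (Fin (m-1) ⊕ (Fin m × Fin 3)), Y.Nonempty ∧ nbhd (Hm m) Y ≠ Set.univ ∧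
      (4:ℝ)/3 = ((nbhd (Hm m) Y).ncard : ℝ) / (Y.ncard : ℝ) := by
  classical
  set p₀ : Fin m := ⟨0, by omega⟩ with hp₀
  set q₁ : Fin m := ⟨1, by omega⟩ with hq₁
  have hq₁ne : q₁ ≠ p₀ := by simp [hp₀, hq₁, Fin.ext_iff]
  set Y₀ : Set (Fin (m-1) ⊕ (Fin m × Fin 3)) :=
    {x | ∃ p i, p ≠ p₀ ∧ x = Sum.inr (p, i)} with hY₀
  have hchar : nbhd (Hm m) Y₀ = {x | ∀ i : Fin 3, x ≠ Sum.inr (p₀, i)} := by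
    ext x
    constructor
    · rintro ⟨y, ⟨p, i, hp, rfl⟩, hadj⟩ i'
      rintro rfl
      exact hp (((hm_adj_inr_inr _ _).1 hadj).2)
    · intro hx
      match x with
      | Sum.inl w => exact ⟨Sum.inr (q₁, 0), ⟨q₁, 0, hq₁ne, rfl⟩, hm_adj_inr_inl _ w⟩
      | Sum.inr (p, i) =>
        have hp : p ≠ p₀ := fun h => hx i (by rw [h])
        refine ⟨Sum.inr (p, if i = 0 then 1 else 0), ⟨p, _, hp, rfl⟩, ?_⟩
        refine (hm_adj_inr_inr _ _).2 ⟨?_, rfl⟩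
        simp only [ne_eq, Prod.mk.injEq, not_and]
        intro _
        fin_cases i <;> decide
  refine ⟨Y₀, ⟨Sum.inr (q₁, 0), ⟨q₁, 0, hq₁ne, rfl⟩⟩, ?_, ?_⟩
  · -- nbhd ≠ univ
    intro he
    have : Sum.inr (p₀, (0:Fin 3)) ∈ nbhd (Hm m) Y₀ := he ▸ Set.mem_univ _
    rw [hchar] at this
    exact this 0 rfl
  · -- cardinalities
    have hYcard : Y₀.ncard = 3 * (m - 1) := by
      have himg : Y₀ = (fun z : {p : Fin m // p ≠ p₀} × Fin 3 => Sum.inr (z.1.1, z.2)) ''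
          Set.univ := by
        ext x
        simp only [Set.image_univ, Set.mem_range, hY₀, Set.mem_setOf_eq]
        constructor
        · rintro ⟨p, i, hp, rfl⟩; exact ⟨⟨⟨p, hp⟩, i⟩, rfl⟩
        · rintro ⟨⟨⟨p, hp⟩, i⟩, rfl⟩; exact ⟨p, i, hp, rfl⟩
      rw [himg, Set.ncard_image_of_injective _ ?_, Set.ncard_univ, Nat.card_eq_fintype_card,
        Fintype.card_prod, Fintype.card_fin]
      · rw [Fintype.card_subtype_compl, Fintype.card_subtype_eq, Fintype.card_fin]
        ring
      · rintro ⟨⟨p, hp⟩, i⟩ ⟨⟨p', hp'⟩, i'⟩ h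
        simp only [Sum.inr.injEq, Prod.mk.injEq] at h
        simp [Prod.ext_iff, Subtype.ext_iff, h.1, h.2]
    have hZ : {x : Fin (m-1) ⊕ (Fin m × Fin 3) | ∀ i : Fin 3, x ≠ Sum.inr (p₀, i)} =
        ((fun i : Fin 3 => (Sum.inr (p₀, i) : Fin (m-1) ⊕ (Fin m × Fin 3))) '' Set.univ)ᶜ := by
      ext x
      simp only [Set.image_univ, Set.mem_compl_iff, Set.mem_range, Set.mem_setOf_eq,
        not_exists]
      exact ⟨fun h i e => h i e.symm, fun h i e => h i e.symm⟩
    have hZcard : ((fun i : Fin 3 => (Sum.inr (p₀, i) : Fin (m-1) ⊕ (Fin m × Fin 3))) ''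
        Set.univ).ncard = 3 := by
      rw [Set.ncard_image_of_injective _ (fun i i' h => by
        simpa [Prod.ext_iff] using h), Set.ncard_univ]
      simp
    have hNcard : (nbhd (Hm m) Y₀).ncard = 4 * (m - 1) := by
      rw [hchar, hZ]
      have := Set.ncard_add_ncard_compl
        ((fun i : Fin 3 => (Sum.inr (p₀, i) : Fin (m-1) ⊕ (Fin m × Fin 3))) '' Set.univ)
      rw [hZcard, Nat.card_eq_fintype_card, Fintype.card_sum, Fintype.card_prod,
        Fintype.card_fin, Fintype.card_fin, Fintype.card_fin] at this
      omega
    rw [hYcard, hNcard]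
    obtain ⟨k, hk⟩ : ∃ k : ℕ, m - 1 = k + 1 := ⟨m - 2, by omega⟩
    rw [hk]
    have hknz : (k:ℝ) + 1 ≠ 0 := by positivity
    push_cast
    field_simp

lemma arith {a n : ℕ} (h1 : a ≤ 3) (h2 : 1 ≤ a → 2 ≤ n) (h3 : 2 ≤ a → 3 ≤ n) :
    4 * a ≤ 3 * n + 3 := by
  match a, h1 with
  | 0, _ => omega
  | 1, _ => have := h2 le_rfl; omega
  | 2, _ => have := h3 le_rfl; omega
  | 3, _ => have := h3 (by omega); omega

lemma key (m : ℕ) (hm : 3 ≤ m) (Y : Set (Fin (m-1) ⊕ (Fin m × Fin 3)))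
    (hne : Y.Nonempty) (hN : nbhd (Hm m) Y ≠ Set.univ) :
    4 * Y.ncard ≤ 3 * (nbhd (Hm m) Y).ncard := by
  classical
  obtain ⟨u, hu⟩ := (Set.ne_univ_iff_exists_notMem _).1 hN
  have humem : ∀ y ∈ Y, ¬ (Hm m).Adj y u := by
    intro y hy hadj
    exact hu ⟨y, hy, hadj⟩
  match u with
  | Sum.inl w =>
    -- Y = {inl w}
    have hYsub : Y = {Sum.inl w} := by
      apply Set.eq_singleton_iff_nonempty_unique_mem.2 ⟨hne, ?_⟩
      intro y hy
      by_contra hne'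
      refine humem y hy ?_
      match y with
      | Sum.inl w' =>
        rw [hm_adj_inl]
        simpa [eq_comm] using hne'
      | Sum.inr a => exact hm_adj_inr_inl a w
    have hYcard : Y.ncard = 1 := by rw [hYsub]; simp
    have hsub : Set.range (Sum.inr : Fin m × Fin 3 → _) ⊆ nbhd (Hm m) Y := by
      rintro _ ⟨a, rfl⟩
      exact ⟨Sum.inl w, by rw [hYsub]; rfl, (hm_adj_inl w _).2 (by simp)⟩
    have hcard : 3 * m ≤ (nbhd (Hm m) Y).ncard := by
      have := Set.ncard_le_ncard hsub (Set.toFinite _)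
      rwa [← Set.image_univ, Set.ncard_image_of_injective _ Sum.inr_injective,
        Set.ncard_univ, Nat.card_eq_fintype_card,
        Fintype.card_prod, Fintype.card_fin, Fintype.card_fin, mul_comm] at this
    omega
  | Sum.inr (q, j) =>
    set N := nbhd (Hm m) Y with hNdef
    -- Y contains no left vertices
    have hYr : ∀ y ∈ Y, ∃ a, y = Sum.inr a := by
      intro y hy
      match y with
      | Sum.inl w => exact absurd ((hm_adj_inl w _).2 (by simp)) (humem _ hy)
      | Sum.inr a => exact ⟨a, rfl⟩
    -- all left vertices are in N
    have hL : ∀ w : Fin (m-1), Sum.inl w ∈ N := by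
      intro w
      obtain ⟨y, hy⟩ := hne
      obtain ⟨a, rfl⟩ := hYr y hy
      exact ⟨_, hy, hm_adj_inr_inl a w⟩
    -- triangle q has at most vertex (q, j) in Y
    have hq : ∀ i : Fin 3, Sum.inr (q, i) ∈ Y → i = j := by
      intro i hi
      by_contra hij
      exact humem _ hi ((hm_adj_inr_inr (q,i) (q,j)).2 ⟨by simp [hij], rfl⟩)
    -- Finset setup
    let YF : Finset (Fin (m-1) ⊕ (Fin m × Fin 3)) := Y.toFinset
    let NF : Finset (Fin (m-1) ⊕ (Fin m × Fin 3)) := N.toFinset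
    let T : Fin m → Finset (Fin (m-1) ⊕ (Fin m × Fin 3)) :=
      fun p => (Finset.univ : Finset (Fin 3)).image fun i => Sum.inr (p, i)
    let L : Finset (Fin (m-1) ⊕ (Fin m × Fin 3)) :=
      (Finset.univ : Finset (Fin (m-1))).image Sum.inl
    have hYF : ∀ x, x ∈ YF ↔ x ∈ Y := fun x => Set.mem_toFinset
    have hNF : ∀ x, x ∈ NF ↔ x ∈ N := fun x => Set.mem_toFinset
    have hTmem : ∀ (p : Fin m) (x : Fin (m-1) ⊕ (Fin m × Fin 3)),
        x ∈ T p ↔ ∃ i, x = Sum.inr (p, i) := by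
      intro p x
      simp only [T, Finset.mem_image, Finset.mem_univ, true_and, eq_comm]
    have hTcard : ∀ p, (T p).card = 3 := by
      intro p
      rw [Finset.card_image_of_injective _ (fun i i' h => by
        simp only [Sum.inr.injEq, Prod.mk.injEq] at h; exact h.2)]
      simp
    have hTdisj : ∀ p p' : Fin m, p ≠ p' → Disjoint (T p) (T p') := by
      intro p p' hpp'
      rw [Finset.disjoint_left]
      intro x hx hx'
      obtain ⟨i, rfl⟩ := (hTmem p x).1 hx
      obtain ⟨i', he⟩ := (hTmem p' _).1 hx'
      simp only [Sum.inr.injEq, Prod.mk.injEq] at he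
      exact hpp' he.1
    let a : Fin m → ℕ := fun p => (YF ∩ T p).card
    let n : Fin m → ℕ := fun p => (NF ∩ T p).card
    -- (1) card YF = ∑ a
    have e1 : YF.card = ∑ p, a p := by
      have : YF = Finset.univ.biUnion fun p => YF ∩ T p := by
        ext x
        simp only [Finset.mem_biUnion, Finset.mem_univ, Finset.mem_inter, true_and]
        constructor
        · intro hx
          obtain ⟨⟨p, i⟩, rfl⟩ := hYr x ((hYF x).1 hx)
          exact ⟨p, hx, (hTmem p _).2 ⟨i, rfl⟩⟩
        · rintro ⟨p, hx, -⟩; exact hx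
      rw [this, Finset.card_biUnion]
      intro p _ p' _ hpp'
      exact (hTdisj p p' hpp').mono Finset.inter_subset_right Finset.inter_subset_right
    -- (2) a p ≤ 3
    have e2 : ∀ p, a p ≤ 3 := fun p =>
      (Finset.card_le_card Finset.inter_subset_right).trans (hTcard p).le
    -- (3) a q ≤ 1
    have e3 : a q ≤ 1 := by
      have : YF ∩ T q ⊆ {Sum.inr (q, j)} := by
        intro x hx
        rw [Finset.mem_inter] at hx
        obtain ⟨i, rfl⟩ := (hTmem q x).1 hx.2
        obtain rfl := hq i ((hYF _).1 hx.1)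
        simp
      simpa using Finset.card_le_card this
    -- (4) 1 ≤ a p → 2 ≤ n p
    have e4 : ∀ p, 1 ≤ a p → 2 ≤ n p := by
      intro p hp
      obtain ⟨y, hy⟩ := Finset.card_pos.1 hp
      rw [Finset.mem_inter] at hy
      obtain ⟨i, rfl⟩ := (hTmem p y).1 hy.2
      have hsub : (T p).erase (Sum.inr (p, i)) ⊆ NF ∩ T p := by
        intro x hx
        rw [Finset.mem_erase] at hx
        obtain ⟨i', rfl⟩ := (hTmem p x).1 hx.2
        refine Finset.mem_inter.2 ⟨(hNF _).2 ?_, hx.2⟩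
        exact ⟨_, (hYF _).1 hy.1, (hm_adj_inr_inr (p,i) (p,i')).2
          ⟨by simpa [eq_comm] using hx.1, rfl⟩⟩
      have := Finset.card_le_card hsub
      rwa [Finset.card_erase_of_mem ((hTmem p _).2 ⟨i, rfl⟩), hTcard] at this
    -- (5) 2 ≤ a p → 3 ≤ n p
    have e5 : ∀ p, 2 ≤ a p → 3 ≤ n p := by
      intro p hp
      have hsub : T p ⊆ NF ∩ T p := by
        intro x hx
        obtain ⟨i, rfl⟩ := (hTmem p x).1 hx
        obtain ⟨y, hy, hyne⟩ := Finset.exists_mem_ne (s := YF ∩ T p) (by exact hp) (Sum.inr (p, i))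
        rw [Finset.mem_inter] at hy
        obtain ⟨i', rfl⟩ := (hTmem p y).1 hy.2
        refine Finset.mem_inter.2 ⟨(hNF _).2 ?_, hx⟩
        exact ⟨_, (hYF _).1 hy.1, (hm_adj_inr_inr (p,i') (p,i)).2 ⟨by simpa using hyne, rfl⟩⟩
      have := Finset.card_le_card hsub
      have h3 := hTcard p
      show 3 ≤ (NF ∩ T p).card
      omega
    -- (6) card NF ≥ (m-1) + ∑ n
    have e6 : (m - 1) + ∑ p, n p ≤ NF.card := by
      have hsub : L ∪ Finset.univ.biUnion (fun p => NF ∩ T p) ⊆ NF := by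
        intro x hx
        rw [Finset.mem_union] at hx
        rcases hx with hx | hx
        · obtain ⟨w, -, rfl⟩ := Finset.mem_image.1 hx
          exact (hNF _).2 (hL w)
        · obtain ⟨p, -, hp⟩ := Finset.mem_biUnion.1 hx
          exact (Finset.mem_inter.1 hp).1
      have hdisj : Disjoint L (Finset.univ.biUnion fun p => NF ∩ T p) := by
        rw [Finset.disjoint_left]
        intro x hx hx'
        obtain ⟨w, -, rfl⟩ := Finset.mem_image.1 hx
        obtain ⟨p, -, hp⟩ := Finset.mem_biUnion.1 hx'
        obtain ⟨i, he⟩ := (hTmem p _).1 (Finset.mem_inter.1 hp).2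
        simp at he
      have hLcard : L.card = m - 1 := by
        rw [Finset.card_image_of_injective _ Sum.inl_injective]
        simp
      have hbi : (Finset.univ.biUnion fun p => NF ∩ T p).card = ∑ p, n p := by
        rw [Finset.card_biUnion]
        intro p _ p' _ hpp'
        exact (hTdisj p p' hpp').mono Finset.inter_subset_right Finset.inter_subset_right
      calc (m-1) + ∑ p, n p = (L ∪ Finset.univ.biUnion fun p => NF ∩ T p).card := by
            rw [Finset.card_union_of_disjoint hdisj, hLcard, hbi]
        _ ≤ NF.card := Finset.card_le_card hsub
    -- arithmetic conclusion
    have eaq : 4 * a q ≤ 3 * n q := by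
      rcases Nat.eq_zero_or_pos (a q) with h | h
      · omega
      · have := e4 q h; omega
    have hsum1 : ∑ p ∈ Finset.univ.erase q, (4 * a p) ≤
        ∑ p ∈ Finset.univ.erase q, (3 * n p + 3) :=
      Finset.sum_le_sum fun p _ => arith (e2 p) (e4 p) (e5 p)
    have hcarderase : (Finset.univ.erase q).card = m - 1 := by
      rw [Finset.card_erase_of_mem (Finset.mem_univ q)]
      simp
    have hsplit_a : ∑ p ∈ Finset.univ.erase q, a p + a q = ∑ p, a p :=
      Finset.sum_erase_add _ _ (Finset.mem_univ q)
    have hsplit_n : ∑ p ∈ Finset.univ.erase q, n p + n q = ∑ p, n p :=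
      Finset.sum_erase_add _ _ (Finset.mem_univ q)
    have hYcard : Y.ncard = YF.card := Set.ncard_eq_toFinset_card' Y
    have hNcard : N.ncard = NF.card := Set.ncard_eq_toFinset_card' N
    rw [hYcard, hNcard, e1]
    rw [← hsplit_a]
    have hA : ∑ p ∈ Finset.univ.erase q, (4 * a p) = 4 * ∑ p ∈ Finset.univ.erase q, a p :=
      (Finset.mul_sum _ _ _).symm
    have hB : ∑ p ∈ Finset.univ.erase q, (3 * n p + 3) =
        3 * (∑ p ∈ Finset.univ.erase q, n p) + 3 * (m - 1) := by
      rw [Finset.sum_add_distrib, ← Finset.mul_sum, Finset.sum_const, hcarderase]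
      ring
    omega

end Aux

theorem stmt18 (m : ℕ) (hm : 3 ≤ m) :
    bindingNumber (Hm m) = 4 / 3 := by
  have hmem : (4:ℝ)/3 ∈ {x : ℝ | ∃ Y : Set (Fin (m-1) ⊕ (Fin m × Fin 3)), Y.Nonempty ∧
      nbhd (Hm m) Y ≠ Set.univ ∧ x = ((nbhd (Hm m) Y).ncard : ℝ) / (Y.ncard : ℝ)} := by
    obtain ⟨Y, h1, h2, h3⟩ := witness m hm
    exact ⟨Y, h1, h2, h3⟩
  apply le_antisymm
  · apply csInf_le
    · refine ⟨0, ?_⟩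
      rintro x ⟨Y, -, -, rfl⟩
      exact div_nonneg (Nat.cast_nonneg _) (Nat.cast_nonneg _)
    · exact hmem
  · apply le_csInf ⟨_, hmem⟩
    rintro x ⟨Y, hne, hNu, rfl⟩
    have hkey := key m hm Y hne hNu
    have hYpos : 0 < Y.ncard := (Set.ncard_pos (Set.toFinite Y)).2 hne
    rw [div_le_div_iff₀ (by norm_num) (by exact_mod_cast hYpos)]
    have : ((4 * Y.ncard : ℕ) : ℝ) ≤ ((3 * (nbhd (Hm m) Y).ncard : ℕ) : ℝ) :=
      Nat.cast_le.2 hkey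
    push_cast at this
    linarith
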